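/- Fix positive constants $L, V^d, \beta$. The function $\hat{D}_1(r, V) = \frac{L}{r} \cdot \frac{(r + V)(r + \beta V^d)}{V^d V(1+\beta) + r(V^d + V)}$ is jointly strictly convex in $(r, V)$ on $(0,\infty)^2$. -/

import Mathlib

private lemma combo_pos {p q t : ℝ} (hp : 0 < p) (hq : 0 < q) (h0 : 0 ≤ t) (h1 : t ≤ 1) :
    0 < p + t * (q - p) := by
  rcases h0.eq_or_lt with h | h
  · rw [← h]; norm_num; exact hp
  · nlinarith [mul_pos h hq, mul_nonneg (sub_nonneg.2 h1) hp.le]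

private lemma Dp_pos {Vd b R V : ℝ} (hVd : 0 < Vd) (hb : 0 < b) (hR : 0 < R) (hV : 0 < V) :
    0 < Vd * V * (1 + b) + R * (Vd + V) := by
  nlinarith [mul_pos hVd hV, mul_pos hR hVd, mul_pos hR hV, mul_pos (mul_pos hVd hV) hb]

set_option maxRecDepth 8000 in
set_option maxHeartbeats 8000000 in
private lemma aux_strict (L Vd b x1 x2 d1 d2 : ℝ)
    (hL : 0 < L) (hVd : 0 < Vd) (hb0 : 0 < b)
    (hne : d1 ≠ 0 ∨ d2 ≠ 0)
    (hRp : ∀ t ∈ Set.Icc (0:ℝ) 1, 0 < x1 + t * d1)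
    (hVp : ∀ t ∈ Set.Icc (0:ℝ) 1, 0 < x2 + t * d2) :
    StrictConvexOn ℝ (Set.Icc (0:ℝ) 1)
      (fun t => L * (((x1 + t * d1) + (x2 + t * d2)) * ((x1 + t * d1) + b * Vd)) / ((x1 + t * d1) * (Vd * (x2 + t * d2) * (1 + b) + (x1 + t * d1) * (Vd + (x2 + t * d2))))) := by
  have hR' : ∀ s : ℝ, HasDerivAt (fun u : ℝ => x1 + u * d1) d1 s :=
    fun s => (hasDerivAt_mul_const d1).const_add x1
  have hV' : ∀ s : ℝ, HasDerivAt (fun u : ℝ => x2 + u * d2) d2 s :=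
    fun s => (hasDerivAt_mul_const d2).const_add x2
  have hn' : ∀ s : ℝ, HasDerivAt (fun u : ℝ => (((x1 + u * d1) + (x2 + u * d2)) * ((x1 + u * d1) + b * Vd))) ((d1 + d2) * ((x1 + s * d1) + b * Vd) + ((x1 + s * d1) + (x2 + s * d2)) * d1) s :=
    fun s => ((hR' s).add (hV' s)).mul ((hR' s).add_const (b * Vd))
  have hDp' : ∀ s : ℝ, HasDerivAt (fun u : ℝ => (Vd * (x2 + u * d2) * (1 + b) + (x1 + u * d1) * (Vd + (x2 + u * d2)))) (Vd * d2 * (1 + b) + (d1 * (Vd + (x2 + s * d2)) + (x1 + s * d1) * d2)) s :=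
    fun s => (((hV' s).const_mul Vd).mul_const (1 + b)).add ((hR' s).mul ((hV' s).const_add Vd))
  have hdd' : ∀ s : ℝ, HasDerivAt (fun u : ℝ => ((x1 + u * d1) * (Vd * (x2 + u * d2) * (1 + b) + (x1 + u * d1) * (Vd + (x2 + u * d2))))) (d1 * (Vd * (x2 + s * d2) * (1 + b) + (x1 + s * d1) * (Vd + (x2 + s * d2))) + (x1 + s * d1) * (Vd * d2 * (1 + b) + (d1 * (Vd + (x2 + s * d2)) + (x1 + s * d1) * d2))) s :=
    fun s => (hR' s).mul (hDp' s)
  have hn1' : ∀ s : ℝ, HasDerivAt (fun u : ℝ => ((d1 + d2) * ((x1 + u * d1) + b * Vd) + ((x1 + u * d1) + (x2 + u * d2)) * d1)) ((d1 + d2) * d1 + (d1 + d2) * d1) s :=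
    fun s => (((hR' s).add_const (b * Vd)).const_mul (d1 + d2)).add
      (((hR' s).add (hV' s)).mul_const d1)
  have hDp1' : ∀ s : ℝ, HasDerivAt (fun u : ℝ => (Vd * d2 * (1 + b) + (d1 * (Vd + (x2 + u * d2)) + (x1 + u * d1) * d2))) (d1 * d2 + d1 * d2) s :=
    fun s => ((((hV' s).const_add Vd).const_mul d1).add ((hR' s).mul_const d2)).const_add
      (Vd * d2 * (1 + b))
  have hdd1' : ∀ s : ℝ, HasDerivAt (fun u : ℝ => (d1 * (Vd * (x2 + u * d2) * (1 + b) + (x1 + u * d1) * (Vd + (x2 + u * d2))) + (x1 + u * d1) * (Vd * d2 * (1 + b) + (d1 * (Vd + (x2 + u * d2)) + (x1 + u * d1) * d2)))) (d1 * (Vd * d2 * (1 + b) + (d1 * (Vd + (x2 + s * d2)) + (x1 + s * d1) * d2)) + (d1 * (Vd * d2 * (1 + b) + (d1 * (Vd + (x2 + s * d2)) + (x1 + s * d1) * d2)) + (x1 + s * d1) * (d1 * d2 + d1 * d2))) s :=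
    fun s => ((hDp' s).const_mul d1).add ((hR' s).mul (hDp1' s))
  have hddpos : ∀ s ∈ Set.Icc (0:ℝ) 1, 0 < ((x1 + s * d1) * (Vd * (x2 + s * d2) * (1 + b) + (x1 + s * d1) * (Vd + (x2 + s * d2)))) :=
    fun s hs => mul_pos (hRp s hs) (Dp_pos hVd hb0 (hRp s hs) (hVp s hs))
  have hU : IsOpen {s : ℝ | 0 < x1 + s * d1 ∧ 0 < x2 + s * d2} := by
    have : {s : ℝ | 0 < x1 + s * d1 ∧ 0 < x2 + s * d2} =
        {s : ℝ | 0 < x1 + s * d1} ∩ {s : ℝ | 0 < x2 + s * d2} := rfl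
    rw [this]
    exact (isOpen_lt continuous_const (by fun_prop)).inter
      (isOpen_lt continuous_const (by fun_prop))
  have hphi : ∀ s : ℝ, (0 < x1 + s * d1 ∧ 0 < x2 + s * d2) →
      HasDerivAt (fun t : ℝ => L * (((x1 + t * d1) + (x2 + t * d2)) * ((x1 + t * d1) + b * Vd)) / ((x1 + t * d1) * (Vd * (x2 + t * d2) * (1 + b) + (x1 + t * d1) * (Vd + (x2 + t * d2))))) ((L * ((d1 + d2) * ((x1 + s * d1) + b * Vd) + ((x1 + s * d1) + (x2 + s * d2)) * d1) * ((x1 + s * d1) * (Vd * (x2 + s * d2) * (1 + b) + (x1 + s * d1) * (Vd + (x2 + s * d2)))) - L * (((x1 + s * d1) + (x2 + s * d2)) * ((x1 + s * d1) + b * Vd)) * (d1 * (Vd * (x2 + s * d2) * (1 + b) + (x1 + s * d1) * (Vd + (x2 + s * d2))) + (x1 + s * d1) * (Vd * d2 * (1 + b) + (d1 * (Vd + (x2 + s * d2)) + (x1 + s * d1) * d2)))) / ((x1 + s * d1) * (Vd * (x2 + s * d2) * (1 + b) + (x1 + s * d1) * (Vd + (x2 + s * d2)))) ^ 2) s :=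 by
    intro s hs
    exact ((hn' s).const_mul L).div (hdd' s) (mul_pos hs.1 (Dp_pos hVd hb0 hs.1 hs.2)).ne'
  apply strictConvexOn_of_deriv2_pos (convex_Icc 0 1)
  · apply ContinuousOn.div
    · exact (by fun_prop : Continuous (fun t : ℝ => L * (((x1 + t * d1) + (x2 + t * d2)) * ((x1 + t * d1) + b * Vd)))).continuousOn
    · exact (by fun_prop : Continuous (fun t : ℝ => ((x1 + t * d1) * (Vd * (x2 + t * d2) * (1 + b) + (x1 + t * d1) * (Vd + (x2 + t * d2)))))).continuousOn
    · exact fun s hs => (hddpos s hs).ne'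
  · intro t ht
    rw [interior_Icc] at ht
    have htI : t ∈ Set.Icc (0:ℝ) 1 := ⟨ht.1.le, ht.2.le⟩
    have hRt : 0 < x1 + t * d1 := hRp t htI
    have hVt : 0 < x2 + t * d2 := hVp t htI
    have hmem : {s : ℝ | 0 < x1 + s * d1 ∧ 0 < x2 + s * d2} ∈ nhds t :=
      hU.mem_nhds ⟨hRt, hVt⟩
    have hev : deriv (fun t : ℝ => L * (((x1 + t * d1) + (x2 + t * d2)) * ((x1 + t * d1) + b * Vd)) / ((x1 + t * d1) * (Vd * (x2 + t * d2) * (1 + b) + (x1 + t * d1) * (Vd + (x2 + t * d2))))) =ᶠ[nhds t]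
        (fun s : ℝ => (L * ((d1 + d2) * ((x1 + s * d1) + b * Vd) + ((x1 + s * d1) + (x2 + s * d2)) * d1) * ((x1 + s * d1) * (Vd * (x2 + s * d2) * (1 + b) + (x1 + s * d1) * (Vd + (x2 + s * d2)))) - L * (((x1 + s * d1) + (x2 + s * d2)) * ((x1 + s * d1) + b * Vd)) * (d1 * (Vd * (x2 + s * d2) * (1 + b) + (x1 + s * d1) * (Vd + (x2 + s * d2))) + (x1 + s * d1) * (Vd * d2 * (1 + b) + (d1 * (Vd + (x2 + s * d2)) + (x1 + s * d1) * d2)))) / ((x1 + s * d1) * (Vd * (x2 + s * d2) * (1 + b) + (x1 + s * d1) * (Vd + (x2 + s * d2)))) ^ 2) :=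
      Filter.eventuallyEq_of_mem hmem (fun s hs => (hphi s hs).deriv)
    have hsq : HasDerivAt (fun s : ℝ => ((x1 + s * d1) * (Vd * (x2 + s * d2) * (1 + b) + (x1 + s * d1) * (Vd + (x2 + s * d2)))) ^ 2)
        ((d1 * (Vd * (x2 + t * d2) * (1 + b) + (x1 + t * d1) * (Vd + (x2 + t * d2))) + (x1 + t * d1) * (Vd * d2 * (1 + b) + (d1 * (Vd + (x2 + t * d2)) + (x1 + t * d1) * d2))) * ((x1 + t * d1) * (Vd * (x2 + t * d2) * (1 + b) + (x1 + t * d1) * (Vd + (x2 + t * d2)))) + ((x1 + t * d1) * (Vd * (x2 + t * d2) * (1 + b) + (x1 + t * d1) * (Vd + (x2 + t * d2)))) * (d1 * (Vd * (x2 + t * d2) * (1 + b) + (x1 + t * d1) * (Vd + (x2 + t * d2))) + (x1 + t * d1) * (Vd * d2 * (1 + b) + (d1 * (Vd + (x2 + t * d2)) + (x1 + t * d1) * d2)))) t := by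
      simpa only [pow_two, Pi.mul_def] using (hdd' t).mul (hdd' t)
    have hnum : HasDerivAt (fun s : ℝ => L * ((d1 + d2) * ((x1 + s * d1) + b * Vd) + ((x1 + s * d1) + (x2 + s * d2)) * d1) * ((x1 + s * d1) * (Vd * (x2 + s * d2) * (1 + b) + (x1 + s * d1) * (Vd + (x2 + s * d2)))) - L * (((x1 + s * d1) + (x2 + s * d2)) * ((x1 + s * d1) + b * Vd)) * (d1 * (Vd * (x2 + s * d2) * (1 + b) + (x1 + s * d1) * (Vd + (x2 + s * d2))) + (x1 + s * d1) * (Vd * d2 * (1 + b) + (d1 * (Vd + (x2 + s * d2)) + (x1 + s * d1) * d2))))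
        ((L * ((d1 + d2) * d1 + (d1 + d2) * d1) * ((x1 + t * d1) * (Vd * (x2 + t * d2) * (1 + b) + (x1 + t * d1) * (Vd + (x2 + t * d2)))) + L * ((d1 + d2) * ((x1 + t * d1) + b * Vd) + ((x1 + t * d1) + (x2 + t * d2)) * d1) * (d1 * (Vd * (x2 + t * d2) * (1 + b) + (x1 + t * d1) * (Vd + (x2 + t * d2))) + (x1 + t * d1) * (Vd * d2 * (1 + b) + (d1 * (Vd + (x2 + t * d2)) + (x1 + t * d1) * d2)))) - (L * ((d1 + d2) * ((x1 + t * d1) + b * Vd) + ((x1 + t * d1) + (x2 + t * d2)) * d1) * (d1 * (Vd * (x2 + t * d2) * (1 + b) + (x1 + t * d1) * (Vd + (x2 + t * d2))) + (x1 + t * d1) * (Vd * d2 * (1 + b) + (d1 * (Vd + (x2 + t * d2)) + (x1 + t * d1) * d2))) + L * (((x1 + t * d1) + (x2 + t * d2)) * ((x1 + t * d1) + b * Vd)) * (d1 * (Vd * d2 * (1 + b) + (d1 * (Vd + (x2 + t * d2)) + (x1 + t * d1) * d2)) + (d1 * (Vd * d2 * (1 + b) + (d1 * (Vd + (x2 +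 t * d2)) + (x1 + t * d1) * d2)) + (x1 + t * d1) * (d1 * d2 + d1 * d2))))) t :=
      (((hn1' t).const_mul L).mul (hdd' t)).sub (((hn' t).const_mul L).mul (hdd1' t))
    have hddt : 0 < ((x1 + t * d1) * (Vd * (x2 + t * d2) * (1 + b) + (x1 + t * d1) * (Vd + (x2 + t * d2)))) := mul_pos hRt (Dp_pos hVd hb0 hRt hVt)
    have hphi1 : HasDerivAt (fun s : ℝ => (L * ((d1 + d2) * ((x1 + s * d1) + b * Vd) + ((x1 + s * d1) + (x2 + s * d2)) * d1) * ((x1 + s * d1) * (Vd * (x2 + s * d2) * (1 + b) + (x1 + s * d1) * (Vd + (x2 + s * d2)))) - L * (((x1 + s * d1) + (x2 + s * d2)) * ((x1 + s * d1) + b * Vd)) * (d1 * (Vd * (x2 + s * d2) * (1 + b) + (x1 + s * d1) * (Vd + (x2 + s * d2))) + (x1 + s * d1) * (Vd * d2 * (1 + b) + (d1 * (Vd + (x2 + s * d2)) + (x1 + s * d1) * d2)))) / ((x1 + s * d1) * (Vd * (x2 + s * d2) * (1 + b) + (x1 + s * d1) * (Vd + (x2 + s * d2)))) ^ 2) ((((L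 * ((d1 + d2) * d1 + (d1 + d2) * d1) * ((x1 + t * d1) * (Vd * (x2 + t * d2) * (1 + b) + (x1 + t * d1) * (Vd + (x2 + t * d2)))) + L * ((d1 + d2) * ((x1 + t * d1) + b * Vd) + ((x1 + t * d1) + (x2 + t * d2)) * d1) * (d1 * (Vd * (x2 + t * d2) * (1 + b) + (x1 + t * d1) * (Vd + (x2 + t * d2))) + (x1 + t * d1) * (Vd * d2 * (1 + b) + (d1 * (Vd + (x2 + t * d2)) + (x1 + t * d1) * d2)))) - (L * ((d1 + d2) * ((x1 + t * d1) + b * Vd) + ((x1 + t * d1) + (x2 + t * d2)) * d1) * (d1 * (Vd * (x2 + t * d2) * (1 + b) + (x1 + t * d1) * (Vd + (x2 + t * d2))) + (x1 + t * d1) * (Vd * d2 * (1 + b) + (d1 * (Vd + (x2 + t * d2)) + (x1 + t * d1) * d2))) + L * (((x1 + t * d1) + (x2 + t * d2)) * ((x1 + t * d1) + b * Vd)) * (d1 * (Vd * d2 * (1 + b) + (d1 * (Vd + (x2 + t * d2)) + (x1 + t * d1) * d2)) + (d1 * (Vd * d2 * (1 + b) + (d1 * (Vd + (x2 + t * d2))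 + (x1 + t * d1) * d2)) + (x1 + t * d1) * (d1 * d2 + d1 * d2))))) * ((x1 + t * d1) * (Vd * (x2 + t * d2) * (1 + b) + (x1 + t * d1) * (Vd + (x2 + t * d2)))) ^ 2 - (L * ((d1 + d2) * ((x1 + t * d1) + b * Vd) + ((x1 + t * d1) + (x2 + t * d2)) * d1) * ((x1 + t * d1) * (Vd * (x2 + t * d2) * (1 + b) + (x1 + t * d1) * (Vd + (x2 + t * d2)))) - L * (((x1 + t * d1) + (x2 + t * d2)) * ((x1 + t * d1) + b * Vd)) * (d1 * (Vd * (x2 + t * d2) * (1 + b) + (x1 + t * d1) * (Vd + (x2 + t * d2))) + (x1 + t * d1) * (Vd * d2 * (1 + b) + (d1 * (Vd + (x2 + t * d2)) + (x1 + t * d1) * d2)))) * ((d1 * (Vd * (x2 + t * d2) * (1 + b) + (x1 + t * d1) * (Vd + (x2 + t * d2))) + (x1 + t * d1) * (Vd * d2 * (1 + b) + (d1 * (Vd + (x2 + t * d2)) + (x1 + t * d1) * d2))) * ((x1 + t * d1) * (Vd * (x2 + t * d2) * (1 + b) + (x1 + t * d1) * (Vd + (x2 + t * d2)))) + ((x1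 + t * d1) * (Vd * (x2 + t * d2) * (1 + b) + (x1 + t * d1) * (Vd + (x2 + t * d2)))) * (d1 * (Vd * (x2 + t * d2) * (1 + b) + (x1 + t * d1) * (Vd + (x2 + t * d2))) + (x1 + t * d1) * (Vd * d2 * (1 + b) + (d1 * (Vd + (x2 + t * d2)) + (x1 + t * d1) * d2))))) / (((x1 + t * d1) * (Vd * (x2 + t * d2) * (1 + b) + (x1 + t * d1) * (Vd + (x2 + t * d2)))) ^ 2) ^ 2) t :=
      hnum.div hsq (pow_ne_zero 2 hddt.ne')
    have h2 : deriv^[2] (fun t : ℝ => L * (((x1 + t * d1) + (x2 + t * d2)) * ((x1 + t * d1) + b * Vd)) / ((x1 + t * d1) * (Vd * (x2 + t * d2) * (1 + b) + (x1 + t * d1) * (Vd + (x2 + t * d2))))) t = (((L * ((d1 + d2) * d1 + (d1 + d2) * d1) * ((x1 + t * d1) * (Vd * (x2 + t * d2) * (1 + b) + (x1 + t * d1) * (Vd + (x2 + t * d2)))) + L * ((d1 + d2) * ((x1 + t * d1) + b * Vd) + ((x1 + t * d1) + (x2 + t * d2)) * d1) * (d1 * (Vd * (x2 + t * d2) * (1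 + b) + (x1 + t * d1) * (Vd + (x2 + t * d2))) + (x1 + t * d1) * (Vd * d2 * (1 + b) + (d1 * (Vd + (x2 + t * d2)) + (x1 + t * d1) * d2)))) - (L * ((d1 + d2) * ((x1 + t * d1) + b * Vd) + ((x1 + t * d1) + (x2 + t * d2)) * d1) * (d1 * (Vd * (x2 + t * d2) * (1 + b) + (x1 + t * d1) * (Vd + (x2 + t * d2))) + (x1 + t * d1) * (Vd * d2 * (1 + b) + (d1 * (Vd + (x2 + t * d2)) + (x1 + t * d1) * d2))) + L * (((x1 + t * d1) + (x2 + t * d2)) * ((x1 + t * d1) + b * Vd)) * (d1 * (Vd * d2 * (1 + b) + (d1 * (Vd + (x2 + t * d2)) + (x1 + t * d1) * d2)) + (d1 * (Vd * d2 * (1 + b) + (d1 * (Vd + (x2 + t * d2)) + (x1 + t * d1) * d2)) + (x1 + t * d1) * (d1 * d2 + d1 * d2))))) * ((x1 + t * d1) * (Vd * (x2 + t * d2) * (1 + b) + (x1 + t * d1) * (Vd + (x2 + t * d2)))) ^ 2 - (L * ((d1 + d2) * ((x1 + t * d1) + b * Vd) + ((x1 + t * d1) + (x2 + t * d2)) *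 d1) * ((x1 + t * d1) * (Vd * (x2 + t * d2) * (1 + b) + (x1 + t * d1) * (Vd + (x2 + t * d2)))) - L * (((x1 + t * d1) + (x2 + t * d2)) * ((x1 + t * d1) + b * Vd)) * (d1 * (Vd * (x2 + t * d2) * (1 + b) + (x1 + t * d1) * (Vd + (x2 + t * d2))) + (x1 + t * d1) * (Vd * d2 * (1 + b) + (d1 * (Vd + (x2 + t * d2)) + (x1 + t * d1) * d2)))) * ((d1 * (Vd * (x2 + t * d2) * (1 + b) + (x1 + t * d1) * (Vd + (x2 + t * d2))) + (x1 + t * d1) * (Vd * d2 * (1 + b) + (d1 * (Vd + (x2 + t * d2)) + (x1 + t * d1) * d2))) * ((x1 + t * d1) * (Vd * (x2 + t * d2) * (1 + b) + (x1 + t * d1) * (Vd + (x2 + t * d2)))) + ((x1 + t * d1) * (Vd * (x2 + t * d2) * (1 + b) + (x1 + t * d1) * (Vd + (x2 + t * d2)))) * (d1 * (Vd * (x2 + t * d2) * (1 + b) + (x1 + t * d1) * (Vd + (x2 + t * d2))) + (x1 + t * d1) * (Vd * d2 * (1 + b) + (d1 * (Vd + (x2 + t * d2)) + (x1 + t * d1)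 * d2))))) / (((x1 + t * d1) * (Vd * (x2 + t * d2) * (1 + b) + (x1 + t * d1) * (Vd + (x2 + t * d2)))) ^ 2) ^ 2 := by
      show deriv (deriv (fun t : ℝ => L * (((x1 + t * d1) + (x2 + t * d2)) * ((x1 + t * d1) + b * Vd)) / ((x1 + t * d1) * (Vd * (x2 + t * d2) * (1 + b) + (x1 + t * d1) * (Vd + (x2 + t * d2)))))) t = _
      rw [hev.deriv_eq, hphi1.deriv]
    rw [h2]
    set Rt := x1 + t * d1 with hRtd
    set Vt := x2 + t * d2 with hVtd
    clear_value Rt Vt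
    apply div_pos
    · have hkey : ((L * ((d1 + d2) * d1 + (d1 + d2) * d1) * (Rt * (Vd * Vt * (1 + b) + Rt * (Vd + Vt))) + L * ((d1 + d2) * (Rt + b * Vd) + (Rt + Vt) * d1) * (d1 * (Vd * Vt * (1 + b) + Rt * (Vd + Vt)) + Rt * (Vd * d2 * (1 + b) + (d1 * (Vd + Vt) + Rt * d2)))) - (L * ((d1 + d2) * (Rt + b * Vd) + (Rt + Vt) * d1) * (d1 * (Vd * Vt * (1 + b) + Rt * (Vd + Vt)) + Rt * (Vd * d2 * (1 + b) + (d1 * (Vd + Vt) + Rt * d2))) + L * ((Rt + Vt) * (Rt + b * Vd)) * (d1 * (Vd * d2 * (1 + b) + (d1 * (Vd + Vt) + Rt * d2)) + (d1 * (Vd * d2 * (1 + b) + (d1 * (Vd + Vt) + Rt * d2)) + Rt * (d1 * d2 + d1 * d2))))) * (Rt * (Vd * Vt * (1 + b) + Rt * (Vd + Vt))) ^ 2 -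
          (L * ((d1 + d2) * (Rt + b * Vd) + (Rt + Vt) * d1) * (Rt * (Vd * Vt * (1 + b) + Rt * (Vd + Vt))) - L * ((Rt + Vt) * (Rt + b * Vd)) * (d1 * (Vd * Vt * (1 + b) + Rt * (Vd + Vt)) + Rt * (Vd * d2 * (1 + b) + (d1 * (Vd + Vt) + Rt * d2)))) *
            ((d1 * (Vd * Vt * (1 + b) + Rt * (Vd + Vt)) + Rt * (Vd * d2 * (1 + b) + (d1 * (Vd + Vt) + Rt * d2))) * (Rt * (Vd * Vt * (1 + b) + Rt * (Vd + Vt))) + (Rt * (Vd * Vt * (1 + b) + Rt * (Vd + Vt))) * (d1 * (Vd * Vt * (1 + b) + Rt * (Vd + Vt)) + Rt * (Vd * d2 * (1 + b) + (d1 * (Vd + Vt) + Rt * d2)))) =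
          (Rt * (Vd * Vt * (1 + b) + Rt * (Vd + Vt))) *
            (L * (d1^2 * (2*Vt^3*b*Vd^3 + 4*Vt^3*b^2*Vd^3 + 2*Vt^3*b^3*Vd^3 + 6*Rt*Vt^2*b*Vd^3 + 6*Rt*Vt^2*b^2*Vd^3 + 6*Rt*Vt^3*b*Vd^2 + 6*Rt*Vt^3*b^2*Vd^2 + 6*Rt^2*Vt*b*Vd^3 + 12*Rt^2*Vt^2*b*Vd^2 + 6*Rt^2*Vt^3*b*Vd + 2*Rt^3*b*Vd^3 + 2*Rt^3*Vt*b*Vd^2 + 2*Rt^3*Vt^2*Vd + 2*Rt^3*Vt^3) + d1 * d2 * (4*Rt^3*b^2*Vd^3 + (-4)*Rt^3*Vt*b*Vd^2 + 4*Rt^4*b*Vd^2 + (-4)*Rt^4*Vt*Vd) + d2^2 * (2*Rt^3*b^2*Vd^3 + 2*Rt^3*b^3*Vd^3 + 4*Rt^4*b*Vd^2 + 6*Rt^4*b^2*Vd^2 + 2*Rt^5*Vd + 6*Rt^5*b*Vd + 2*Rt^6))) := by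
        ring
      rw [hkey]
      apply mul_pos hddt
      apply mul_pos hL
      have hA : 0 < 2*Vt^3*b*Vd^3 + 4*Vt^3*b^2*Vd^3 + 2*Vt^3*b^3*Vd^3 + 6*Rt*Vt^2*b*Vd^3 + 6*Rt*Vt^2*b^2*Vd^3 + 6*Rt*Vt^3*b*Vd^2 + 6*Rt*Vt^3*b^2*Vd^2 + 6*Rt^2*Vt*b*Vd^3 + 12*Rt^2*Vt^2*b*Vd^2 + 6*Rt^2*Vt^3*b*Vd + 2*Rt^3*b*Vd^3 + 2*Rt^3*Vt*b*Vd^2 + 2*Rt^3*Vt^2*Vd + 2*Rt^3*Vt^3 := by positivity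
      have hG : 0 < 16*Rt^3*Vt^3*b^3*Vd^6 + 48*Rt^3*Vt^3*b^4*Vd^6 + 48*Rt^3*Vt^3*b^5*Vd^6 + 16*Rt^3*Vt^3*b^6*Vd^6 + 48*Rt^4*Vt^2*b^3*Vd^6 + 96*Rt^4*Vt^2*b^4*Vd^6 + 48*Rt^4*Vt^2*b^5*Vd^6 + 32*Rt^4*Vt^3*b^2*Vd^5 + 160*Rt^4*Vt^3*b^3*Vd^5 + 224*Rt^4*Vt^3*b^4*Vd^5 + 96*Rt^4*Vt^3*b^5*Vd^5 + 48*Rt^5*Vt*b^3*Vd^6 + 48*Rt^5*Vt*b^4*Vd^6 + 96*Rt^5*Vt^2*b^2*Vd^5 + 336*Rt^5*Vt^2*b^3*Vd^5 + 240*Rt^5*Vt^2*b^4*Vd^5 + 16*Rt^5*Vt^3*b*Vd^4 + 176*Rt^5*Vt^3*b^2*Vd^4 + 400*Rt^5*Vt^3*b^3*Vd^4 + 240*Rt^5*Vt^3*b^4*Vd^4 + 16*Rt^6*b^3*Vd^6 + 96*Rt^6*Vt*b^2*Vd^5 + 192*Rt^6*Vt*b^3*Vd^5 + 16*Rt^6*Vt*b^4*Vd^5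 + 48*Rt^6*Vt^2*b*Vd^4 + 384*Rt^6*Vt^2*b^2*Vd^4 + 448*Rt^6*Vt^2*b^3*Vd^4 + 64*Rt^6*Vt^3*b*Vd^3 + 336*Rt^6*Vt^3*b^2*Vd^3 + 320*Rt^6*Vt^3*b^3*Vd^3 + 32*Rt^7*b^2*Vd^5 + 16*Rt^7*b^3*Vd^5 + 48*Rt^7*Vt*b*Vd^4 + 240*Rt^7*Vt*b^2*Vd^4 + 48*Rt^7*Vt*b^3*Vd^4 + 144*Rt^7*Vt^2*b*Vd^3 + 384*Rt^7*Vt^2*b^2*Vd^3 + 128*Rt^7*Vt^3*b*Vd^2 + 240*Rt^7*Vt^3*b^2*Vd^2 + 16*Rt^8*b*Vd^4 + 32*Rt^8*b^2*Vd^4 + 96*Rt^8*Vt*b*Vd^3 + 48*Rt^8*Vt*b^2*Vd^3 + 144*Rt^8*Vt^2*b*Vd^2 + 16*Rt^8*Vt^3*Vd + 96*Rt^8*Vt^3*b*Vd + 16*Rt^9*b*Vd^3 + 16*Rt^9*Vt*b*Vd^2 + 16*Rt^9*Vt^2*Vd + 16*Rt^9*Vt^3 := by positivity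
      have hid : (d1^2 * (2*Vt^3*b*Vd^3 + 4*Vt^3*b^2*Vd^3 + 2*Vt^3*b^3*Vd^3 + 6*Rt*Vt^2*b*Vd^3 + 6*Rt*Vt^2*b^2*Vd^3 + 6*Rt*Vt^3*b*Vd^2 + 6*Rt*Vt^3*b^2*Vd^2 + 6*Rt^2*Vt*b*Vd^3 + 12*Rt^2*Vt^2*b*Vd^2 + 6*Rt^2*Vt^3*b*Vd + 2*Rt^3*b*Vd^3 + 2*Rt^3*Vt*b*Vd^2 + 2*Rt^3*Vt^2*Vd + 2*Rt^3*Vt^3) + d1 * d2 * (4*Rt^3*b^2*Vd^3 + (-4)*Rt^3*Vt*b*Vd^2 + 4*Rt^4*b*Vd^2 + (-4)*Rt^4*Vt*Vd) + d2^2 * (2*Rt^3*b^2*Vd^3 + 2*Rt^3*b^3*Vd^3 + 4*Rt^4*b*Vd^2 + 6*Rt^4*b^2*Vd^2 + 2*Rt^5*Vd + 6*Rt^5*b*Vd + 2*Rt^6)) * (4 * (2*Vt^3*b*Vd^3 + 4*Vt^3*b^2*Vd^3 + 2*Vt^3*b^3*Vd^3 + 6*Rt*Vt^2*b*Vd^3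 + 6*Rt*Vt^2*b^2*Vd^3 + 6*Rt*Vt^3*b*Vd^2 + 6*Rt*Vt^3*b^2*Vd^2 + 6*Rt^2*Vt*b*Vd^3 + 12*Rt^2*Vt^2*b*Vd^2 + 6*Rt^2*Vt^3*b*Vd + 2*Rt^3*b*Vd^3 + 2*Rt^3*Vt*b*Vd^2 + 2*Rt^3*Vt^2*Vd + 2*Rt^3*Vt^3)) =
          (2 * (2*Vt^3*b*Vd^3 + 4*Vt^3*b^2*Vd^3 + 2*Vt^3*b^3*Vd^3 + 6*Rt*Vt^2*b*Vd^3 + 6*Rt*Vt^2*b^2*Vd^3 + 6*Rt*Vt^3*b*Vd^2 + 6*Rt*Vt^3*b^2*Vd^2 + 6*Rt^2*Vt*b*Vd^3 + 12*Rt^2*Vt^2*b*Vd^2 + 6*Rt^2*Vt^3*b*Vd + 2*Rt^3*b*Vd^3 + 2*Rt^3*Vt*b*Vd^2 + 2*Rt^3*Vt^2*Vd + 2*Rt^3*Vt^3) * d1 + (4*Rt^3*b^2*Vd^3 + (-4)*Rt^3*Vt*b*Vd^2 + 4*Rt^4*b*Vd^2 + (-4)*Rt^4*Vt*Vd) * d2)^2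 + (16*Rt^3*Vt^3*b^3*Vd^6 + 48*Rt^3*Vt^3*b^4*Vd^6 + 48*Rt^3*Vt^3*b^5*Vd^6 + 16*Rt^3*Vt^3*b^6*Vd^6 + 48*Rt^4*Vt^2*b^3*Vd^6 + 96*Rt^4*Vt^2*b^4*Vd^6 + 48*Rt^4*Vt^2*b^5*Vd^6 + 32*Rt^4*Vt^3*b^2*Vd^5 + 160*Rt^4*Vt^3*b^3*Vd^5 + 224*Rt^4*Vt^3*b^4*Vd^5 + 96*Rt^4*Vt^3*b^5*Vd^5 + 48*Rt^5*Vt*b^3*Vd^6 + 48*Rt^5*Vt*b^4*Vd^6 + 96*Rt^5*Vt^2*b^2*Vd^5 + 336*Rt^5*Vt^2*b^3*Vd^5 + 240*Rt^5*Vt^2*b^4*Vd^5 + 16*Rt^5*Vt^3*b*Vd^4 + 176*Rt^5*Vt^3*b^2*Vd^4 + 400*Rt^5*Vt^3*b^3*Vd^4 + 240*Rt^5*Vt^3*b^4*Vd^4 + 16*Rt^6*b^3*Vd^6 + 96*Rt^6*Vt*b^2*Vd^5 + 192*Rt^6*Vt*b^3*Vd^5 + 16*Rt^6*Vt*b^4*Vd^5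 + 48*Rt^6*Vt^2*b*Vd^4 + 384*Rt^6*Vt^2*b^2*Vd^4 + 448*Rt^6*Vt^2*b^3*Vd^4 + 64*Rt^6*Vt^3*b*Vd^3 + 336*Rt^6*Vt^3*b^2*Vd^3 + 320*Rt^6*Vt^3*b^3*Vd^3 + 32*Rt^7*b^2*Vd^5 + 16*Rt^7*b^3*Vd^5 + 48*Rt^7*Vt*b*Vd^4 + 240*Rt^7*Vt*b^2*Vd^4 + 48*Rt^7*Vt*b^3*Vd^4 + 144*Rt^7*Vt^2*b*Vd^3 + 384*Rt^7*Vt^2*b^2*Vd^3 + 128*Rt^7*Vt^3*b*Vd^2 + 240*Rt^7*Vt^3*b^2*Vd^2 + 16*Rt^8*b*Vd^4 + 32*Rt^8*b^2*Vd^4 + 96*Rt^8*Vt*b*Vd^3 + 48*Rt^8*Vt*b^2*Vd^3 + 144*Rt^8*Vt^2*b*Vd^2 + 16*Rt^8*Vt^3*Vd + 96*Rt^8*Vt^3*b*Vd + 16*Rt^9*b*Vd^3 + 16*Rt^9*Vt*b*Vd^2 + 16*Rt^9*Vt^2*Vd + 16*Rt^9*Vt^3) * d2^2 := by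
        ring
      rcases eq_or_ne d2 0 with h2z | h2z
      · have hd1 : d1 ≠ 0 := by
          rcases hne with h | h
          · exact h
          · exact absurd h2z h
        have hE : d1^2 * (2*Vt^3*b*Vd^3 + 4*Vt^3*b^2*Vd^3 + 2*Vt^3*b^3*Vd^3 + 6*Rt*Vt^2*b*Vd^3 + 6*Rt*Vt^2*b^2*Vd^3 + 6*Rt*Vt^3*b*Vd^2 + 6*Rt*Vt^3*b^2*Vd^2 + 6*Rt^2*Vt*b*Vd^3 + 12*Rt^2*Vt^2*b*Vd^2 + 6*Rt^2*Vt^3*b*Vd + 2*Rt^3*b*Vd^3 + 2*Rt^3*Vt*b*Vd^2 + 2*Rt^3*Vt^2*Vd + 2*Rt^3*Vt^3) + d1 * d2 * (4*Rt^3*b^2*Vd^3 + (-4)*Rt^3*Vt*b*Vd^2 + 4*Rt^4*b*Vd^2 + (-4)*Rt^4*Vt*Vd) + d2^2 * (2*Rt^3*b^2*Vd^3 + 2*Rt^3*b^3*Vd^3 + 4*Rt^4*b*Vd^2 + 6*Rt^4*b^2*Vd^2 + 2*Rt^5*Vd + 6*Rt^5*b*Vd + 2*Rt^6) = d1^2 *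 (2*Vt^3*b*Vd^3 + 4*Vt^3*b^2*Vd^3 + 2*Vt^3*b^3*Vd^3 + 6*Rt*Vt^2*b*Vd^3 + 6*Rt*Vt^2*b^2*Vd^3 + 6*Rt*Vt^3*b*Vd^2 + 6*Rt*Vt^3*b^2*Vd^2 + 6*Rt^2*Vt*b*Vd^3 + 12*Rt^2*Vt^2*b*Vd^2 + 6*Rt^2*Vt^3*b*Vd + 2*Rt^3*b*Vd^3 + 2*Rt^3*Vt*b*Vd^2 + 2*Rt^3*Vt^2*Vd + 2*Rt^3*Vt^3) := by
          rw [h2z]; ring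
        rw [hE]
        exact mul_pos (pow_pos (abs_pos.mpr hd1) 2 |>.trans_eq (by rw [sq_abs])) hA
      · have hpos : 0 < (2 * (2*Vt^3*b*Vd^3 + 4*Vt^3*b^2*Vd^3 + 2*Vt^3*b^3*Vd^3 + 6*Rt*Vt^2*b*Vd^3 + 6*Rt*Vt^2*b^2*Vd^3 + 6*Rt*Vt^3*b*Vd^2 + 6*Rt*Vt^3*b^2*Vd^2 + 6*Rt^2*Vt*b*Vd^3 + 12*Rt^2*Vt^2*b*Vd^2 + 6*Rt^2*Vt^3*b*Vd + 2*Rt^3*b*Vd^3 + 2*Rt^3*Vt*b*Vd^2 + 2*Rt^3*Vt^2*Vd + 2*Rt^3*Vt^3) * d1 + (4*Rt^3*b^2*Vd^3 + (-4)*Rt^3*Vt*b*Vd^2 + 4*Rt^4*b*Vd^2 + (-4)*Rt^4*Vt*Vd) * d2)^2 + (16*Rt^3*Vt^3*b^3*Vd^6 + 48*Rt^3*Vt^3*b^4*Vd^6 + 48*Rt^3*Vt^3*b^5*Vd^6 + 16*Rt^3*Vt^3*b^6*Vd^6 + 48*Rt^4*Vt^2*b^3*Vd^6 + 96*Rt^4*Vt^2*b^4*Vd^6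 + 48*Rt^4*Vt^2*b^5*Vd^6 + 32*Rt^4*Vt^3*b^2*Vd^5 + 160*Rt^4*Vt^3*b^3*Vd^5 + 224*Rt^4*Vt^3*b^4*Vd^5 + 96*Rt^4*Vt^3*b^5*Vd^5 + 48*Rt^5*Vt*b^3*Vd^6 + 48*Rt^5*Vt*b^4*Vd^6 + 96*Rt^5*Vt^2*b^2*Vd^5 + 336*Rt^5*Vt^2*b^3*Vd^5 + 240*Rt^5*Vt^2*b^4*Vd^5 + 16*Rt^5*Vt^3*b*Vd^4 + 176*Rt^5*Vt^3*b^2*Vd^4 + 400*Rt^5*Vt^3*b^3*Vd^4 + 240*Rt^5*Vt^3*b^4*Vd^4 + 16*Rt^6*b^3*Vd^6 + 96*Rt^6*Vt*b^2*Vd^5 + 192*Rt^6*Vt*b^3*Vd^5 + 16*Rt^6*Vt*b^4*Vd^5 + 48*Rt^6*Vt^2*b*Vd^4 + 384*Rt^6*Vt^2*b^2*Vd^4 + 448*Rt^6*Vt^2*b^3*Vd^4 + 64*Rt^6*Vt^3*b*Vd^3 + 336*Rt^6*Vt^3*b^2*Vd^3 + 320*Rt^6*Vt^3*b^3*Vd^3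 + 32*Rt^7*b^2*Vd^5 + 16*Rt^7*b^3*Vd^5 + 48*Rt^7*Vt*b*Vd^4 + 240*Rt^7*Vt*b^2*Vd^4 + 48*Rt^7*Vt*b^3*Vd^4 + 144*Rt^7*Vt^2*b*Vd^3 + 384*Rt^7*Vt^2*b^2*Vd^3 + 128*Rt^7*Vt^3*b*Vd^2 + 240*Rt^7*Vt^3*b^2*Vd^2 + 16*Rt^8*b*Vd^4 + 32*Rt^8*b^2*Vd^4 + 96*Rt^8*Vt*b*Vd^3 + 48*Rt^8*Vt*b^2*Vd^3 + 144*Rt^8*Vt^2*b*Vd^2 + 16*Rt^8*Vt^3*Vd + 96*Rt^8*Vt^3*b*Vd + 16*Rt^9*b*Vd^3 + 16*Rt^9*Vt*b*Vd^2 + 16*Rt^9*Vt^2*Vd + 16*Rt^9*Vt^3) * d2^2 :=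
          add_pos_of_nonneg_of_pos (sq_nonneg _) (mul_pos hG (pow_two_pos_of_ne_zero h2z))
        rw [← hid] at hpos
        rcases mul_pos_iff.mp hpos with ⟨h, _⟩ | ⟨_, h⟩
        · exact h
        · exfalso; linarith
    · positivity

theorem D1_jointly_strictly_convex
    (L Vd β : ℝ)
    (hL : 0 < L) (hVd : 0 < Vd) (hβ0 : 0 < β) (hβ1 : β < 1)
    (D1 : ℝ × ℝ → ℝ)
    (hD1 : ∀ p : ℝ × ℝ, D1 p = L / p.1 * ((p.1 + p.2) * (p.1 + β * Vd) /
      (Vd * p.2 * (1 + β) + p.1 * (Vd + p.2)))) :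
    StrictConvexOn ℝ (Set.Ioi 0 ×ˢ Set.Ioi 0) D1 := by
  constructor
  · exact (convex_Ioi 0).prod (convex_Ioi 0)
  · intro x hx y hy hxy a b ha hb hab
    obtain ⟨hx1, hx2⟩ := Set.mem_prod.mp hx
    obtain ⟨hy1, hy2⟩ := Set.mem_prod.mp hy
    rw [Set.mem_Ioi] at hx1 hx2 hy1 hy2
    have hne : y.1 - x.1 ≠ 0 ∨ y.2 - x.2 ≠ 0 := by
      by_contra h
      push_neg at h
      exact hxy (Prod.ext (by linarith [h.1]) (by linarith [h.2]))
    have hRp : ∀ t ∈ Set.Icc (0:ℝ) 1, 0 < x.1 + t * (y.1 - x.1) :=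
      fun t ht => combo_pos hx1 hy1 ht.1 ht.2
    have hVp : ∀ t ∈ Set.Icc (0:ℝ) 1, 0 < x.2 + t * (y.2 - x.2) :=
      fun t ht => combo_pos hx2 hy2 ht.1 ht.2
    have haux := aux_strict L Vd β x.1 x.2 (y.1 - x.1) (y.2 - x.2) hL hVd hβ0 hne hRp hVp
    have key := haux.2 (Set.mem_Icc.mpr ⟨le_refl 0, zero_le_one⟩)
      (Set.mem_Icc.mpr ⟨zero_le_one, le_refl 1⟩) (by norm_num) ha hb hab
    have harg : a • (0:ℝ) + b • (1:ℝ) = b := by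
      simp [smul_eq_mul]
    rw [harg, smul_eq_mul, smul_eq_mul] at key
    have hab' : a = 1 - b := by linarith
    have hd0 : (0:ℝ) < Vd * x.2 * (1 + β) + x.1 * (Vd + x.2) := Dp_pos hVd hβ0 hx1 hx2
    have hd1 : (0:ℝ) < Vd * y.2 * (1 + β) + y.1 * (Vd + y.2) := Dp_pos hVd hβ0 hy1 hy2
    have e0 : (fun t : ℝ => L * (((x.1 + t * (y.1 - x.1)) + (x.2 + t * (y.2 - x.2))) * ((x.1 + t * (y.1 - x.1)) + β * Vd)) / ((x.1 + t * (y.1 - x.1)) * (Vd * (x.2 + t * (y.2 - x.2)) * (1 + β) + (x.1 + t * (y.1 - x.1)) * (Vd + (x.2 + t * (y.2 - x.2)))))) 0 = D1 x := by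
      rw [hD1]
      have h1 : x.1 + (0:ℝ) * (y.1 - x.1) = x.1 := by ring
      have h2 : x.2 + (0:ℝ) * (y.2 - x.2) = x.2 := by ring
      simp only [h1, h2]
      rw [div_mul_div_comm]
    have e1 : (fun t : ℝ => L * (((x.1 + t * (y.1 - x.1)) + (x.2 + t * (y.2 - x.2))) * ((x.1 + t * (y.1 - x.1)) + β * Vd)) / ((x.1 + t * (y.1 - x.1)) * (Vd * (x.2 + t * (y.2 - x.2)) * (1 + β) + (x.1 + t * (y.1 - x.1)) * (Vd + (x.2 + t * (y.2 - x.2)))))) 1 = D1 y := by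
      rw [hD1]
      have h1 : x.1 + (1:ℝ) * (y.1 - x.1) = y.1 := by ring
      have h2 : x.2 + (1:ℝ) * (y.2 - x.2) = y.2 := by ring
      simp only [h1, h2]
      rw [div_mul_div_comm]
    have eb : (fun t : ℝ => L * (((x.1 + t * (y.1 - x.1)) + (x.2 + t * (y.2 - x.2))) * ((x.1 + t * (y.1 - x.1)) + β * Vd)) / ((x.1 + t * (y.1 - x.1)) * (Vd * (x.2 + t * (y.2 - x.2)) * (1 + β) + (x.1 + t * (y.1 - x.1)) * (Vd + (x.2 + t * (y.2 - x.2)))))) b = D1 (a • x + b • y) := by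
      rw [hD1]
      have h1 : x.1 + b * (y.1 - x.1) = (a • x + b • y).1 := by
        simp only [Prod.fst_add, Prod.smul_fst, smul_eq_mul]
        rw [hab']; ring
      have h2 : x.2 + b * (y.2 - x.2) = (a • x + b • y).2 := by
        simp only [Prod.snd_add, Prod.smul_snd, smul_eq_mul]
        rw [hab']; ring
      simp only [h1, h2]
      rw [div_mul_div_comm]
    rw [e0, e1, eb] at key
    simpa [smul_eq_mul] using key
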